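/- Let A = (a_ij) be an N×N real matrix with nonnegative entries and zero diagonal such that the directed graph G[A] is strongly connected. Let b_1,…,b_N ≥ 0 with b_k > 0 for at least one k, and let α_1,…,α_N ≥ 0 satisfy 2α_i b_i < 1 and d_i^+[A] · α_i/(1 − 2α_i b_i) < 1/2 for every i, where d_i^+[A] = Σ_j a_ij. Let z_1,…,z_N, v_1,…,v_N : [0,∞) → ℝ^m be continuous functions satisfying the coupling relation v_i(t) + b_i z_i(t) = Σ_{j=1}^N a_ij (z_j(t) − z_i(t)) for all t and i, and suppose there exist constants 𝒲_i ≥ 0 such that ∫_0^T (⟨z_i(t), v_i(t)⟩ + α_i |v_i(t)|²) dt ≥ −𝒲_i for all T ≥ 0 and all i. Then ∫_0^∞ |z_i(t)|² dt < ∞ and ∫_0^∞ |v_i(t)|² dt < ∞ for every i. -/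

import Mathlib

open RealInnerProductSpace MeasureTheory

private lemma exists_perron' {N : ℕ} [NeZero N] (A : Fin N → Fin N → ℝ)
    (hA_nonneg : ∀ i j, 0 ≤ A i j)
    (hconn : ∀ i j : Fin N, i ≠ j → Relation.TransGen (fun a b => 0 < A a b) i j) :
    ∃ ξ : Fin N → ℝ, (∀ i, 0 < ξ i) ∧ ∀ j, ξ j * (∑ l, A j l) = ∑ i, ξ i * A i j := by
  classical
  set L : Matrix (Fin N) (Fin N) ℝ :=
    Matrix.of (fun i j => (if i = j then (∑ l, A i l) else 0) - A i j) with hL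
  have hdetL : L.det = 0 := by
    rw [← Matrix.exists_mulVec_eq_zero_iff]
    refine ⟨fun _ => 1, ?_, ?_⟩
    · intro h
      have := congrFun h ⟨0, Nat.pos_of_ne_zero (NeZero.ne N)⟩
      simp at this
    · funext i
      simp only [Matrix.mulVec, dotProduct, hL, Matrix.of_apply, mul_one,
        Pi.zero_apply]
      rw [Finset.sum_sub_distrib]
      simp
  obtain ⟨ζ, hζ0, hζ⟩ := Matrix.exists_vecMul_eq_zero_iff.2 hdetL
  have hz : ∀ j, ζ j * (∑ l, A j l) = ∑ i, ζ i * A i j := by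
    intro j
    have h0 := congrFun hζ j
    simp only [Matrix.vecMul, dotProduct, hL, Matrix.of_apply, Pi.zero_apply,
      mul_sub, Finset.sum_sub_distrib, sub_eq_zero] at h0
    have h1 : ∑ i, ζ i * (if i = j then (∑ l, A i l) else 0) = ζ j * ∑ l, A j l := by
      rw [Finset.sum_eq_single j] <;> simp +contextual
    rw [h1] at h0
    exact h0
  set ξ : Fin N → ℝ := fun i => |ζ i| with hξdef
  have hle : ∀ j, ξ j * (∑ l, A j l) ≤ ∑ i, ξ i * A i j := by
    intro j
    have h2 : |ζ j * (∑ l, A j l)| ≤ ∑ i, |ζ i * A i j| := by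
      rw [hz j]; exact Finset.abs_sum_le_sum_abs _ _
    calc ξ j * (∑ l, A j l) = |ζ j * (∑ l, A j l)| := by
          rw [abs_mul, abs_of_nonneg (Finset.sum_nonneg fun l _ => hA_nonneg j l)]
      _ ≤ ∑ i, |ζ i * A i j| := h2
      _ = ∑ i, ξ i * A i j := by
          refine Finset.sum_congr rfl fun i _ => ?_
          rw [abs_mul, abs_of_nonneg (hA_nonneg i j)]
  have hsum : ∑ j, ξ j * (∑ l, A j l) = ∑ j, ∑ i, ξ i * A i j := by
    rw [Finset.sum_comm]
    simp [Finset.mul_sum]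
  have heq : ∀ j, ξ j * (∑ l, A j l) = ∑ i, ξ i * A i j := by
    intro j
    exact ((Finset.sum_eq_sum_iff_of_le (fun i _ => hle i)).1 hsum j (Finset.mem_univ j))
  have hξnn : ∀ i, 0 ≤ ξ i := fun i => abs_nonneg _
  have hstep : ∀ p q : Fin N, 0 < A p q → ξ q = 0 → ξ p = 0 := by
    intro p q hpq hq
    have h0 : ∑ i, ξ i * A i q = 0 := by rw [← heq q, hq, zero_mul]
    have := (Finset.sum_eq_zero_iff_of_nonneg
      (fun i _ => mul_nonneg (hξnn i) (hA_nonneg i q))).1 h0 p (Finset.mem_univ p)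
    rcases mul_eq_zero.1 this with h | h
    · exact h
    · exact absurd h (ne_of_gt hpq)
  have hpath : ∀ p q : Fin N, Relation.TransGen (fun a b => 0 < A a b) p q →
      ξ q = 0 → ξ p = 0 := by
    intro p q h
    induction h with
    | single h => exact hstep _ _ h
    | tail _ h ih => intro hq; exact ih (hstep _ _ h hq)
  have hpos : ∀ i, 0 < ξ i := by
    by_contra hc
    push_neg at hc
    obtain ⟨j, hj⟩ := hc
    have hj0 : ξ j = 0 := le_antisymm hj (hξnn j)
    have hall : ∀ i, ξ i = 0 := by
      intro i
      by_cases hij : i = j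
      · rw [hij]; exact hj0
      · exact hpath i j (hconn i j hij) hj0
    apply hζ0
    funext i
    simpa [hξdef, abs_eq_zero] using hall i
  exact ⟨ξ, hpos, heq⟩

private lemma norm_sum_smul_sq_le' {E : Type*} [NormedAddCommGroup E] [NormedSpace ℝ E]
    {N : ℕ} (a : Fin N → ℝ) (ha : ∀ i, 0 ≤ a i) (u : Fin N → E) :
    ‖∑ i, a i • u i‖ ^ 2 ≤ (∑ i, a i) * ∑ i, a i * ‖u i‖ ^ 2 := by
  have h1 : ‖∑ i, a i • u i‖ ≤ ∑ i, a i * ‖u i‖ := by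
    refine (norm_sum_le _ _).trans_eq ?_
    refine Finset.sum_congr rfl fun i _ => ?_
    rw [norm_smul, Real.norm_of_nonneg (ha i)]
  have h2 : (∑ i, a i * ‖u i‖) ^ 2 ≤ (∑ i, a i) * ∑ i, a i * ‖u i‖ ^ 2 := by
    have hcs := Finset.sum_mul_sq_le_sq_mul_sq Finset.univ
      (fun i => Real.sqrt (a i)) (fun i => Real.sqrt (a i) * ‖u i‖)
    calc (∑ i, a i * ‖u i‖) ^ 2
        = (∑ i, Real.sqrt (a i) * (Real.sqrt (a i) * ‖u i‖)) ^ 2 := by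
          congr 1; refine Finset.sum_congr rfl fun i _ => ?_
          rw [← mul_assoc, Real.mul_self_sqrt (ha i)]
      _ ≤ (∑ i, Real.sqrt (a i) ^ 2) * ∑ i, (Real.sqrt (a i) * ‖u i‖) ^ 2 := hcs
      _ = (∑ i, a i) * ∑ i, a i * ‖u i‖ ^ 2 := by
          congr 1
          · exact Finset.sum_congr rfl fun i _ => Real.sq_sqrt (ha i)
          · refine Finset.sum_congr rfl fun i _ => ?_
            rw [mul_pow, Real.sq_sqrt (ha i)]
  calc ‖∑ i, a i • u i‖ ^ 2 ≤ (∑ i, a i * ‖u i‖) ^ 2 :=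
        pow_le_pow_left₀ (norm_nonneg _) h1 2
    _ ≤ _ := h2

private lemma L2_of_dominated' {f Q : ℝ → ℝ} (hf : Continuous f) (hfnn : ∀ t, 0 ≤ f t)
    (hQc : Continuous Q) {C W₀ : ℝ} (hC : 0 ≤ C)
    (hdom : ∀ t, f t ≤ C * Q t)
    (hQb : ∀ T, 0 ≤ T → ∫ t in (0:ℝ)..T, Q t ≤ W₀) :
    IntegrableOn f (Set.Ici (0:ℝ)) := by
  rw [integrableOn_Ici_iff_integrableOn_Ioi]
  apply MeasureTheory.integrableOn_Ioi_of_intervalIntegral_norm_bounded (C * W₀) 0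
    (fun T : ℝ => hf.integrableOn_Ioc) (Filter.tendsto_id (α := ℝ))
  filter_upwards [Filter.eventually_ge_atTop (0:ℝ)] with T hT
  have h1 : (∫ t in (0:ℝ)..T, ‖f t‖) = ∫ t in (0:ℝ)..T, f t := by
    congr 1; funext t; exact Real.norm_of_nonneg (hfnn t)
  rw [id, h1]
  calc (∫ t in (0:ℝ)..T, f t) ≤ ∫ t in (0:ℝ)..T, C * Q t := by
        apply intervalIntegral.integral_mono_on hT (hf.intervalIntegrable _ _)
          ((continuous_const.mul hQc).intervalIntegrable _ _)
        exact fun x _ => hdom x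
    _ = C * ∫ t in (0:ℝ)..T, Q t := intervalIntegral.integral_const_mul _ _
    _ ≤ C * W₀ := mul_le_mul_of_nonneg_left (hQb T hT) hC

set_option maxHeartbeats 1000000 in
/-- Theorem 1⁺, statement (1) (leader-following, deviation form): with `G[A]`
strongly connected, `b_i ≥ 0` not all zero, `2α_i b_i < 1` and
`d_i⁺[A]·α_i/(1-2α_i b_i) < 1/2`, if the deviations satisfy the coupling
`v_i + b_i z_i = ∑ j a_ij (z_j - z_i)` and the integrated incremental passivity
condition, then `z_i, v_i ∈ L²[0,∞)` for every `i`. -/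
theorem leader_following_L2_deviations
    (N m : ℕ) (A : Fin N → Fin N → ℝ)
    (hA_nonneg : ∀ i j, 0 ≤ A i j)
    (hA_diag : ∀ i, A i i = 0)
    (hconn : ∀ i j : Fin N, i ≠ j → Relation.TransGen (fun a b => 0 < A a b) i j)
    (b : Fin N → ℝ)
    (hb_nonneg : ∀ i, 0 ≤ b i)
    (hb_pos : ∃ k, 0 < b k)
    (α : Fin N → ℝ)
    (hα_nonneg : ∀ i, 0 ≤ α i)
    (hαb : ∀ i, 2 * α i * b i < 1)
    (hα_deg : ∀ i, (∑ j, A i j) * (α i / (1 - 2 * α i * b i)) < 1 / 2)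
    (z v : Fin N → ℝ → EuclideanSpace ℝ (Fin m))
    (hz_cont : ∀ i, Continuous (z i))
    (hv_cont : ∀ i, Continuous (v i))
    (hcoupling : ∀ i t, v i t + b i • z i t = ∑ j, A i j • (z j t - z i t))
    (𝒲 : Fin N → ℝ)
    (h𝒲_nonneg : ∀ i, 0 ≤ 𝒲 i)
    (hdiss : ∀ i, ∀ T, 0 ≤ T →
      -𝒲 i ≤ ∫ t in (0 : ℝ)..T, (⟪z i t, v i t⟫ + α i * ‖v i t‖ ^ 2)) :
    (∀ i, IntegrableOn (fun t => ‖z i t‖ ^ 2) (Set.Ici (0 : ℝ))) ∧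
    (∀ i, IntegrableOn (fun t => ‖v i t‖ ^ 2) (Set.Ici (0 : ℝ))) := by
  classical
  obtain ⟨k, hk⟩ := hb_pos
  haveI : NeZero N := NeZero.of_pos k.pos
  obtain ⟨ξ, hξpos, hξ⟩ := exists_perron' A hA_nonneg hconn
  set d : Fin N → ℝ := fun i => ∑ j, A i j with hd_def
  set β : Fin N → ℝ := fun i => 1 - 2 * α i * b i with hβ_def
  have hβpos : ∀ i, 0 < β i := fun i => by
    simp only [hβ_def]; linarith [hαb i]
  set ε : Fin N → ℝ := fun i => 1/2 - d i * (α i / β i) with hε_def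
  have hεpos : ∀ i, 0 < ε i := fun i => by
    simp only [hε_def, hβ_def, hd_def]; linarith [hα_deg i]
  set γ : Fin N → ℝ := fun i => b i * (1 - α i * b i) / β i with hγ_def
  have h1αb : ∀ i, 0 < 1 - α i * b i := fun i => by
    have h := hαb i; have h2 := mul_nonneg (hα_nonneg i) (hb_nonneg i); linarith
  have hγnn : ∀ i, 0 ≤ γ i := fun i => by
    simp only [hγ_def]
    exact div_nonneg (mul_nonneg (hb_nonneg i) (h1αb i).le) (hβpos i).le
  have hγk : 0 < γ k := by
    simp only [hγ_def]
    exact div_pos (mul_pos hk (h1αb k)) (hβpos k)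
  set Q : ℝ → ℝ := fun t =>
    ∑ i, ξ i * (ε i * (∑ j, A i j * ‖z j t - z i t‖ ^ 2) + γ i * ‖z i t‖ ^ 2) with hQ_def
  -- per-node pointwise inequality
  have hper : ∀ i t, (ξ i / β i) * (⟪z i t, v i t⟫ + α i * ‖v i t‖ ^ 2) ≤
      ξ i * ((∑ j, A i j * (‖z j t‖ ^ 2 - ‖z i t‖ ^ 2)) / 2)
      - ξ i * (ε i * (∑ j, A i j * ‖z j t - z i t‖ ^ 2) + γ i * ‖z i t‖ ^ 2) := by
    intro i t
    set w : EuclideanSpace ℝ (Fin m) := ∑ j, A i j • (z j t - z i t) with hw_def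
    have hv : v i t = w - b i • z i t := by
      rw [eq_sub_iff_add_eq]; exact hcoupling i t
    have hinner_w : ⟪z i t, w⟫ =
        ∑ j, A i j * ((‖z j t‖ ^ 2 - ‖z i t‖ ^ 2 - ‖z j t - z i t‖ ^ 2) / 2) := by
      rw [hw_def, inner_sum]
      refine Finset.sum_congr rfl fun j _ => ?_
      rw [real_inner_smul_right]
      congr 1
      have h1 : ‖z j t - z i t‖ ^ 2 = ‖z j t‖ ^ 2 - 2 * ⟪z j t, z i t⟫ + ‖z i t‖ ^ 2 :=
        norm_sub_sq_real _ _
      have h2 : ⟪z i t, z j t - z i t⟫ = ⟪z i t, z j t⟫ - ‖z i t‖ ^ 2 := by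
        rw [inner_sub_right, real_inner_self_eq_norm_sq]
      rw [h2, real_inner_comm, h1]; ring
    have hwsq : ‖w‖ ^ 2 ≤ d i * ∑ j, A i j * ‖z j t - z i t‖ ^ 2 := by
      simp only [hd_def]
      exact norm_sum_smul_sq_le' _ (fun j => hA_nonneg i j) _
    have hXid : ⟪z i t, v i t⟫ + α i * ‖v i t‖ ^ 2
        = β i * ⟪z i t, w⟫ + α i * ‖w‖ ^ 2 - b i * (1 - α i * b i) * ‖z i t‖ ^ 2 := by
      rw [hv]
      have e1 : ⟪z i t, w - b i • z i t⟫ = ⟪z i t, w⟫ - b i * ‖z i t‖ ^ 2 := by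
        rw [inner_sub_right, real_inner_smul_right, real_inner_self_eq_norm_sq]
      have e2 : ‖w - b i • z i t‖ ^ 2
          = ‖w‖ ^ 2 - 2 * (b i * ⟪z i t, w⟫) + b i ^ 2 * ‖z i t‖ ^ 2 := by
        rw [norm_sub_sq_real, real_inner_smul_right, real_inner_comm, norm_smul,
          mul_pow, Real.norm_eq_abs, sq_abs]
      rw [e1, e2]
      simp only [hβ_def]; ring
    have hs : ((∑ j, A i j * (‖z j t‖ ^ 2 - ‖z i t‖ ^ 2))
          - (∑ j, A i j * ‖z j t - z i t‖ ^ 2)) / 2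
        = ∑ j, A i j * ((‖z j t‖ ^ 2 - ‖z i t‖ ^ 2 - ‖z j t - z i t‖ ^ 2) / 2) := by
      rw [← Finset.sum_sub_distrib, Finset.sum_div]
      exact Finset.sum_congr rfl fun j _ => by ring
    have hstep1 : ⟪z i t, v i t⟫ + α i * ‖v i t‖ ^ 2 ≤
        β i * (((∑ j, A i j * (‖z j t‖ ^ 2 - ‖z i t‖ ^ 2))
            - (∑ j, A i j * ‖z j t - z i t‖ ^ 2)) / 2)
        + α i * (d i * ∑ j, A i j * ‖z j t - z i t‖ ^ 2)
        - b i * (1 - α i * b i) * ‖z i t‖ ^ 2 := by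
      rw [hXid, hinner_w, hs]
      have h4 := mul_le_mul_of_nonneg_left hwsq (hα_nonneg i)
      linarith
    have h0 := mul_le_mul_of_nonneg_left hstep1
      (div_nonneg (hξpos i).le (hβpos i).le)
    refine h0.trans_eq ?_
    have hβne : β i ≠ 0 := (hβpos i).ne'
    simp only [hε_def, hγ_def]
    field_simp
    ring
  -- cancellation via the Perron vector
  have hcancel : ∀ t : ℝ,
      ∑ i, ξ i * ((∑ j, A i j * (‖z j t‖ ^ 2 - ‖z i t‖ ^ 2)) / 2) = 0 := by
    intro t
    have h1 : ∑ i, ξ i * ∑ j, A i j * ‖z j t‖ ^ 2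
        = ∑ i, ξ i * ∑ j, A i j * ‖z i t‖ ^ 2 := by
      calc ∑ i, ξ i * ∑ j, A i j * ‖z j t‖ ^ 2
          = ∑ i, ∑ j, ξ i * (A i j * ‖z j t‖ ^ 2) := by
            exact Finset.sum_congr rfl fun i _ => Finset.mul_sum _ _ _
        _ = ∑ j, ∑ i, ξ i * (A i j * ‖z j t‖ ^ 2) := Finset.sum_comm
        _ = ∑ j, (∑ i, ξ i * A i j) * ‖z j t‖ ^ 2 := by
            refine Finset.sum_congr rfl fun j _ => ?_
            rw [Finset.sum_mul]
            exact Finset.sum_congr rfl fun i _ => by ring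
        _ = ∑ j, (ξ j * (∑ l, A j l)) * ‖z j t‖ ^ 2 := by
            refine Finset.sum_congr rfl fun j _ => ?_
            rw [← hξ j]
        _ = ∑ i, ξ i * ∑ j, A i j * ‖z i t‖ ^ 2 := by
            refine Finset.sum_congr rfl fun j _ => ?_
            rw [← Finset.sum_mul, mul_assoc]
    have h2 : ∀ i, ξ i * ((∑ j, A i j * (‖z j t‖ ^ 2 - ‖z i t‖ ^ 2)) / 2)
        = (ξ i * ∑ j, A i j * ‖z j t‖ ^ 2 - ξ i * ∑ j, A i j * ‖z i t‖ ^ 2) / 2 := by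
      intro i
      have h3 : (∑ j, A i j * (‖z j t‖ ^ 2 - ‖z i t‖ ^ 2))
          = (∑ j, A i j * ‖z j t‖ ^ 2) - ∑ j, A i j * ‖z i t‖ ^ 2 := by
        rw [← Finset.sum_sub_distrib]
        exact Finset.sum_congr rfl fun j _ => by ring
      rw [h3]; ring
    calc ∑ i, ξ i * ((∑ j, A i j * (‖z j t‖ ^ 2 - ‖z i t‖ ^ 2)) / 2)
        = ∑ i, (ξ i * ∑ j, A i j * ‖z j t‖ ^ 2
            - ξ i * ∑ j, A i j * ‖z i t‖ ^ 2) / 2 :=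
          Finset.sum_congr rfl fun i _ => h2 i
      _ = ((∑ i, ξ i * ∑ j, A i j * ‖z j t‖ ^ 2)
            - ∑ i, ξ i * ∑ j, A i j * ‖z i t‖ ^ 2) / 2 := by
          rw [← Finset.sum_div, Finset.sum_sub_distrib]
      _ = 0 := by rw [h1, sub_self, zero_div]
  -- key summed pointwise inequality
  have hkey : ∀ t : ℝ,
      ∑ i, (ξ i / β i) * (⟪z i t, v i t⟫ + α i * ‖v i t‖ ^ 2) ≤ -(Q t) := by
    intro t
    calc ∑ i, (ξ i / β i) * (⟪z i t, v i t⟫ + α i * ‖v i t‖ ^ 2)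
        ≤ ∑ i, (ξ i * ((∑ j, A i j * (‖z j t‖ ^ 2 - ‖z i t‖ ^ 2)) / 2)
            - ξ i * (ε i * (∑ j, A i j * ‖z j t - z i t‖ ^ 2) + γ i * ‖z i t‖ ^ 2)) :=
          Finset.sum_le_sum fun i _ => hper i t
      _ = (∑ i, ξ i * ((∑ j, A i j * (‖z j t‖ ^ 2 - ‖z i t‖ ^ 2)) / 2))
          - ∑ i, ξ i * (ε i * (∑ j, A i j * ‖z j t - z i t‖ ^ 2) + γ i * ‖z i t‖ ^ 2) :=
          Finset.sum_sub_distrib _ _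
      _ = -(Q t) := by rw [hcancel t, zero_sub]
  -- nonnegativity of Q and continuity facts
  have hQnn : ∀ t, 0 ≤ Q t := by
    intro t
    refine Finset.sum_nonneg fun i _ => mul_nonneg (hξpos i).le (add_nonneg ?_ ?_)
    · exact mul_nonneg (hεpos i).le
        (Finset.sum_nonneg fun j _ => mul_nonneg (hA_nonneg i j) (sq_nonneg _))
    · exact mul_nonneg (hγnn i) (sq_nonneg _)
  have hgcont : ∀ i, Continuous (fun t => ⟪z i t, v i t⟫ + α i * ‖v i t‖ ^ 2) := fun i =>
    ((hz_cont i).inner (hv_cont i)).add (continuous_const.mul ((hv_cont i).norm.pow 2))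
  have hQcont : Continuous Q := by
    rw [hQ_def]
    refine continuous_finset_sum _ fun i _ => Continuous.mul continuous_const ?_
    refine Continuous.add ?_ (continuous_const.mul ((hz_cont i).norm.pow 2))
    refine Continuous.mul continuous_const ?_
    exact continuous_finset_sum _ fun j _ =>
      continuous_const.mul (((hz_cont j).sub (hz_cont i)).norm.pow 2)
  -- integral bound on Q
  have hQint : ∀ T, 0 ≤ T → (∫ t in (0:ℝ)..T, Q t) ≤ ∑ i, (ξ i / β i) * 𝒲 i := by
    intro T hT
    have hScont : Continuous (fun t =>
        ∑ i, (ξ i / β i) * (⟪z i t, v i t⟫ + α i * ‖v i t‖ ^ 2)) :=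
      continuous_finset_sum _ fun i _ => continuous_const.mul (hgcont i)
    have hmono : (∫ t in (0:ℝ)..T, Q t) ≤ ∫ t in (0:ℝ)..T,
        -(∑ i, (ξ i / β i) * (⟪z i t, v i t⟫ + α i * ‖v i t‖ ^ 2)) := by
      refine intervalIntegral.integral_mono_on hT (hQcont.intervalIntegrable _ _)
        (hScont.neg.intervalIntegrable _ _) fun x _ => ?_
      linarith [hkey x]
    refine hmono.trans ?_
    have hrw : (∫ t in (0:ℝ)..T,
        -(∑ i, (ξ i / β i) * (⟪z i t, v i t⟫ + α i * ‖v i t‖ ^ 2)))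
        = -∑ i, (ξ i / β i) * ∫ t in (0:ℝ)..T, (⟪z i t, v i t⟫ + α i * ‖v i t‖ ^ 2) := by
      rw [intervalIntegral.integral_neg]
      congr 1
      rw [intervalIntegral.integral_finset_sum
        (f := fun i t => (ξ i / β i) * (⟪z i t, v i t⟫ + α i * ‖v i t‖ ^ 2))
        (fun i _ => (continuous_const.mul (hgcont i)).intervalIntegrable _ _)]
      exact Finset.sum_congr rfl fun i _ => intervalIntegral.integral_const_mul _ _
    rw [hrw, ← Finset.sum_neg_distrib]
    refine Finset.sum_le_sum fun i _ => ?_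
    rw [← mul_neg]
    refine mul_le_mul_of_nonneg_left ?_ (div_nonneg (hξpos i).le (hβpos i).le)
    linarith [hdiss i T hT]
  -- pointwise bounds extracted from Q
  have htermQ : ∀ p (t : ℝ),
      ξ p * (ε p * (∑ j, A p j * ‖z j t - z p t‖ ^ 2) + γ p * ‖z p t‖ ^ 2) ≤ Q t := by
    intro p t
    refine Finset.single_le_sum (f := fun i =>
      ξ i * (ε i * (∑ j, A i j * ‖z j t - z i t‖ ^ 2) + γ i * ‖z i t‖ ^ 2))
      (fun i _ => mul_nonneg (hξpos i).le (add_nonneg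
        (mul_nonneg (hεpos i).le
          (Finset.sum_nonneg fun j _ => mul_nonneg (hA_nonneg i j) (sq_nonneg _)))
        (mul_nonneg (hγnn i) (sq_nonneg _)))) (Finset.mem_univ p)
  have hSnn : ∀ p (t : ℝ), 0 ≤ ∑ j, A p j * ‖z j t - z p t‖ ^ 2 := fun p t =>
    Finset.sum_nonneg fun j _ => mul_nonneg (hA_nonneg p j) (sq_nonneg _)
  have hSbound : ∀ p (t : ℝ),
      ξ p * ε p * (∑ j, A p j * ‖z j t - z p t‖ ^ 2) ≤ Q t := by
    intro p t
    have h1 := htermQ p t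
    have h2 : 0 ≤ ξ p * (γ p * ‖z p t‖ ^ 2) :=
      mul_nonneg (hξpos p).le (mul_nonneg (hγnn p) (sq_nonneg _))
    nlinarith
  have hedge : ∀ p q (t : ℝ), 0 < A p q →
      ‖z q t - z p t‖ ^ 2 ≤ Q t / (ξ p * ε p * A p q) := by
    intro p q t hpq
    have hP : 0 < ξ p * ε p * A p q := mul_pos (mul_pos (hξpos p) (hεpos p)) hpq
    rw [le_div_iff₀ hP]
    calc ‖z q t - z p t‖ ^ 2 * (ξ p * ε p * A p q)
        = ξ p * ε p * (A p q * ‖z q t - z p t‖ ^ 2) := by ring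
      _ ≤ ξ p * ε p * (∑ j, A p j * ‖z j t - z p t‖ ^ 2) := by
          refine mul_le_mul_of_nonneg_left ?_
            (mul_nonneg (hξpos p).le (hεpos p).le)
          exact Finset.single_le_sum (f := fun j => A p j * ‖z j t - z p t‖ ^ 2)
            (fun j _ => mul_nonneg (hA_nonneg p j) (sq_nonneg _)) (Finset.mem_univ q)
      _ ≤ Q t := hSbound p t
  -- L∞-type domination of each ‖z i‖² by Q
  have hzb : ∀ i, ∃ C : ℝ, 0 < C ∧ ∀ t, ‖z i t‖ ^ 2 ≤ C * Q t := by
    have hbase : ∃ C : ℝ, 0 < C ∧ ∀ t, ‖z k t‖ ^ 2 ≤ C * Q t := by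
      have hP : 0 < ξ k * γ k := mul_pos (hξpos k) hγk
      refine ⟨1 / (ξ k * γ k), by positivity, fun t => ?_⟩
      have h1 : ξ k * γ k * ‖z k t‖ ^ 2 ≤ Q t := by
        have h2 := htermQ k t
        have h3 : 0 ≤ ξ k * (ε k * (∑ j, A k j * ‖z j t - z k t‖ ^ 2)) :=
          mul_nonneg (hξpos k).le (mul_nonneg (hεpos k).le (hSnn k t))
        nlinarith
      rw [one_div, inv_mul_eq_div, le_div_iff₀ hP]
      linarith [h1]
    have hstepP : ∀ p q, 0 < A p q →
        (∃ C : ℝ, 0 < C ∧ ∀ t, ‖z q t‖ ^ 2 ≤ C * Q t) →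
        ∃ C : ℝ, 0 < C ∧ ∀ t, ‖z p t‖ ^ 2 ≤ C * Q t := by
      rintro p q hpq ⟨C, hC, hCb⟩
      have hP : 0 < ξ p * ε p * A p q := mul_pos (mul_pos (hξpos p) (hεpos p)) hpq
      refine ⟨2 / (ξ p * ε p * A p q) + 2 * C, by positivity, fun t => ?_⟩
      have h1 := hedge p q t hpq
      have h2 := hCb t
      have h3 : ‖z p t‖ ≤ ‖z q t‖ + ‖z q t - z p t‖ := by
        have h4 : z p t = z q t - (z q t - z p t) := by abel
        calc ‖z p t‖ = ‖z q t - (z q t - z p t)‖ := by rw [← h4]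
          _ ≤ ‖z q t‖ + ‖z q t - z p t‖ := norm_sub_le _ _
      have h5 : ‖z p t‖ ^ 2 ≤ 2 * ‖z q t - z p t‖ ^ 2 + 2 * ‖z q t‖ ^ 2 := by
        have h4 := pow_le_pow_left₀ (norm_nonneg (z p t)) h3 2
        nlinarith [sq_nonneg (‖z q t‖ - ‖z q t - z p t‖)]
      calc ‖z p t‖ ^ 2 ≤ 2 * ‖z q t - z p t‖ ^ 2 + 2 * ‖z q t‖ ^ 2 := h5
        _ ≤ 2 * (Q t / (ξ p * ε p * A p q)) + 2 * (C * Q t) := by linarith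
        _ = (2 / (ξ p * ε p * A p q) + 2 * C) * Q t := by ring
    intro i
    by_cases hik : i = k
    · rw [hik]; exact hbase
    · exact Relation.TransGen.head_induction_on (hconn i k hik)
        (fun {a} h => hstepP a k h hbase)
        (fun {a c} h' _ ih => hstepP a c h' ih)
  -- domination of ‖v i‖² by Q
  have hvb : ∀ i, ∃ C : ℝ, 0 < C ∧ ∀ t, ‖v i t‖ ^ 2 ≤ C * Q t := by
    intro i
    obtain ⟨C, hC, hCb⟩ := hzb i
    have hPi : 0 < ξ i * ε i := mul_pos (hξpos i) (hεpos i)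
    have hdnn : 0 ≤ d i := by
      simp only [hd_def]
      exact Finset.sum_nonneg fun j _ => hA_nonneg i j
    refine ⟨2 * (d i / (ξ i * ε i)) + 2 * (b i ^ 2 * C) + 1, ?_, fun t => ?_⟩
    · have e0 : 0 ≤ 2 * (d i / (ξ i * ε i)) :=
        mul_nonneg (by norm_num) (div_nonneg hdnn hPi.le)
      have e0' : 0 ≤ 2 * (b i ^ 2 * C) :=
        mul_nonneg (by norm_num) (mul_nonneg (sq_nonneg _) hC.le)
      linarith
    · have hw : v i t = (∑ j, A i j • (z j t - z i t)) - b i • z i t := by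
        rw [eq_sub_iff_add_eq]; exact hcoupling i t
      have hwsq : ‖∑ j, A i j • (z j t - z i t)‖ ^ 2
          ≤ d i * ∑ j, A i j * ‖z j t - z i t‖ ^ 2 := by
        simp only [hd_def]
        exact norm_sum_smul_sq_le' _ (fun j => hA_nonneg i j) _
      have hwn : ‖v i t‖ ≤ ‖∑ j, A i j • (z j t - z i t)‖ + b i * ‖z i t‖ := by
        rw [hw]
        refine (norm_sub_le _ _).trans ?_
        rw [norm_smul, Real.norm_of_nonneg (hb_nonneg i)]
      have hSle : (∑ j, A i j * ‖z j t - z i t‖ ^ 2) ≤ Q t / (ξ i * ε i) := by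
        rw [le_div_iff₀ hPi]
        calc (∑ j, A i j * ‖z j t - z i t‖ ^ 2) * (ξ i * ε i)
            = ξ i * ε i * (∑ j, A i j * ‖z j t - z i t‖ ^ 2) := by ring
          _ ≤ Q t := hSbound i t
      have e1 : ‖v i t‖ ^ 2 ≤ 2 * ‖∑ j, A i j • (z j t - z i t)‖ ^ 2
          + 2 * (b i * ‖z i t‖) ^ 2 := by
        have h4 := pow_le_pow_left₀ (norm_nonneg (v i t)) hwn 2
        nlinarith [sq_nonneg (‖∑ j, A i j • (z j t - z i t)‖ - b i * ‖z i t‖)]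
      have e3 : b i ^ 2 * ‖z i t‖ ^ 2 ≤ b i ^ 2 * (C * Q t) :=
        mul_le_mul_of_nonneg_left (hCb t) (sq_nonneg _)
      have e4 : d i * (∑ j, A i j * ‖z j t - z i t‖ ^ 2) ≤ d i * (Q t / (ξ i * ε i)) :=
        mul_le_mul_of_nonneg_left hSle hdnn
      have e5 : 2 * (d i * (Q t / (ξ i * ε i))) + 2 * (b i ^ 2 * (C * Q t))
          = (2 * (d i / (ξ i * ε i)) + 2 * (b i ^ 2 * C)) * Q t := by ring
      have e2 : (b i * ‖z i t‖) ^ 2 = b i ^ 2 * ‖z i t‖ ^ 2 := by ring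
      have e6 : (2 * (d i / (ξ i * ε i)) + 2 * (b i ^ 2 * C)) * Q t
          ≤ (2 * (d i / (ξ i * ε i)) + 2 * (b i ^ 2 * C) + 1) * Q t := by
        have h7 := hQnn t
        nlinarith
      linarith [e1, e2, e3, hwsq, e4, e5, e6]
  -- conclude integrability
  constructor
  · intro i
    obtain ⟨C, hC, hCb⟩ := hzb i
    exact L2_of_dominated' ((hz_cont i).norm.pow 2) (fun t => sq_nonneg _)
      hQcont hC.le hCb hQint
  · intro i
    obtain ⟨C, hC, hCb⟩ := hvb i
    exact L2_of_dominated' ((hv_cont i).norm.pow 2) (fun t => sq_nonneg _)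
      hQcont hC.le hCb hQint
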